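/- Let D be an oriented graph whose underlying graph is a split graph with split partition V(D) = K ∪ S, where K induces a clique and S an independent set, and |K| ≥ 2. Let S_s and S_t be, respectively, the sets of sinks and sources of D that lie in S. Then hn_{P3}(D) ≤ |S_s ∪ S_t| + 2, and moreover every hull set of D in the P3 convexity contains S_s ∪ S_t; hence |S_s ∪ S_t| ≤ hn_{P3}(D) ≤ |S_s ∪ S_t| + 2. -/

import Mathlib

/-! Basic machinery for convexity on oriented graphs. -/

/-- A directed walk along the arc relation `A` from `u` to `v`,
recorded as the (nonempty) list of its vertices. Its length is `l.length - 1`. -/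
def DiWalk {V : Type*} (A : V → V → Prop) (u v : V) (l : List V) : Prop :=
  l.head? = some u ∧ l.getLast? = some v ∧ l.Chain' A

/-- A shortest directed walk (geodesic) from `u` to `v`:
a directed walk of minimum length among all directed `(u,v)`-walks. -/
def IsGeodesic {V : Type*} (A : V → V → Prop) (u v : V) (l : List V) : Prop :=
  DiWalk A u v l ∧ ∀ l', DiWalk A u v l' → l.length ≤ l'.length

/-- Geodetic interval: `u`, `v`, and all vertices lying on a shortest directed
`(u,v)`-path or on a shortest directed `(v,u)`-path. -/
def geoInterval {V : Type*} (A : V → V → Prop) (u v : V) : Set V :=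
  {u, v} ∪ {w | (∃ l, IsGeodesic A u v l ∧ w ∈ l) ∨ (∃ l, IsGeodesic A v u l ∧ w ∈ l)}

/-- P3 interval: `u`, `v`, and all vertices lying on a directed `(u,v)`- or
`(v,u)`-path of length two. -/
def p3Interval {V : Type*} (A : V → V → Prop) (u v : V) : Set V :=
  {u, v} ∪ {w | (A u w ∧ A w v) ∨ (A v w ∧ A w u)}

/-- P3* interval: `u`, `v`, and all vertices lying on a shortest directed `(u,v)`- or
`(v,u)`-path of length two (i.e. the corresponding endpoints are not adjacent). -/
def p3sInterval {V : Type*} (A : V → V → Prop) (u v : V) : Set V :=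
  {u, v} ∪ {w | (A u w ∧ A w v ∧ ¬ A u v) ∨ (A v w ∧ A w u ∧ ¬ A v u)}

/-- A set is convex for the interval function `I` if it is closed under `I`. -/
def IsConvexSet {V : Type*} (I : V → V → Set V) (C : Set V) : Prop :=
  ∀ u ∈ C, ∀ v ∈ C, I u v ⊆ C

/-- The convex hull of `S`: the smallest convex set containing `S`. -/
def convexHullD {V : Type*} (I : V → V → Set V) (S : Set V) : Set V :=
  ⋂₀ {C | IsConvexSet I C ∧ S ⊆ C}

/-- `S` is an interval set if applying `I` to pairs of `S` covers all vertices. -/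
def IsIntervalSet {V : Type*} (I : V → V → Set V) (S : Set V) : Prop :=
  (⋃ u ∈ S, ⋃ v ∈ S, I u v) = Set.univ

/-- `S` is a hull set if its convex hull is the whole vertex set. -/
def IsHullSet {V : Type*} (I : V → V → Set V) (S : Set V) : Prop :=
  convexHullD I S = Set.univ

/-- The interval number: minimum cardinality of an interval set. -/
noncomputable def intervalNumber {V : Type*} (I : V → V → Set V) : ℕ :=
  sInf {k | ∃ S : Set V, IsIntervalSet I S ∧ S.ncard = k}

/-- The hull number: minimum cardinality of a hull set. -/
noncomputable def hullNumber {V : Type*} (I : V → V → Set V) : ℕ :=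
  sInf {k | ∃ S : Set V, IsHullSet I S ∧ S.ncard = k}

/-- `v` is reachable from `u` by a directed walk. -/
def Reach {V : Type*} (A : V → V → Prop) (u v : V) : Prop :=
  ∃ l, DiWalk A u v l

/-- An oriented graph: no loops and at most one arc between any two vertices. -/
def IsOriented {V : Type*} (A : V → V → Prop) : Prop :=
  ∀ u v, A u v → ¬ A v u

/-- Strong connectivity. -/
def StronglyConnected {V : Type*} (A : V → V → Prop) : Prop :=
  ∀ u v, Reach A u v

/-- Connectivity of the underlying undirected graph. -/
def ConnectedD {V : Type*} (A : V → V → Prop) : Prop :=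
  ∀ u v : V, Reach (fun a b => A a b ∨ A b a) u v

/-- A strong component: an equivalence class of mutual reachability. -/
def IsStrongComponent {V : Type*} (A : V → V → Prop) (C : Set V) : Prop :=
  ∃ v, C = {u | Reach A u v ∧ Reach A v u}

/-- A sink strong component: a strong component with no arc leaving it. -/
def IsSinkComponent {V : Type*} (A : V → V → Prop) (C : Set V) : Prop :=
  IsStrongComponent A C ∧ ∀ u ∈ C, ∀ w, w ∉ C → ¬ A u w

/-- A source strong component: a strong component with no arc entering it. -/
def IsSourceComponent {V : Type*} (A : V → V → Prop) (C : Set V) : Prop :=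
  IsStrongComponent A C ∧ ∀ u ∈ C, ∀ w, w ∉ C → ¬ A w u

/-- The out-section of `u`: all vertices reachable from `u`. -/
def outSection {V : Type*} (A : V → V → Prop) (u : V) : Set V :=
  {w | Reach A u w}

/-- The in-section of `u`: all vertices from which `u` is reachable. -/
def inSection {V : Type*} (A : V → V → Prop) (u : V) : Set V :=
  {w | Reach A w u}

/-- A tournament: an oriented graph where every two distinct vertices are adjacent. -/
def IsTournament {V : Type*} (A : V → V → Prop) : Prop :=
  (∀ u v, A u v → ¬ A v u) ∧ ∀ u v : V, u ≠ v → A u v ∨ A v u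

/-- The number of arcs of the digraph given by `A`. -/
noncomputable def arcCount {V : Type*} (A : V → V → Prop) : ℕ :=
  Nat.card {p : V × V // A p.1 p.2}

/-- auxiliary: arcs inside `K`. -/
def kEdge {V : Type*} (A : V → V → Prop) (K : Set V) (u v : V) : Prop :=
  u ∈ K ∧ v ∈ K ∧ A u v

lemma subset_convexHullD' {V : Type*} (I : V → V → Set V) (s : Set V) :
    s ⊆ convexHullD I s := fun v hv _C hC => hC.2 hv

lemma convexHullD_isConvex' {V : Type*} (I : V → V → Set V) (s : Set V) :
    IsConvexSet I (convexHullD I s) := by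
  intro u hu v hv w hw C hC
  exact hC.1 u (hu C hC) v (hv C hC) hw

lemma convexHullD_min' {V : Type*} {I : V → V → Set V} {s C : Set V}
    (hC : IsConvexSet I C) (hsC : s ⊆ C) : convexHullD I s ⊆ C :=
  Set.sInter_subset_of_mem ⟨hC, hsC⟩

lemma isHullSet_univ' {V : Type*} (I : V → V → Set V) : IsHullSet I Set.univ :=
  Set.eq_univ_of_univ_subset (subset_convexHullD' I _)

lemma tournament_reach' {V : Type*} [Finite V] (B : V → V → Prop) (K : Set V)
    (hK : ∀ u ∈ K, ∀ v ∈ K, u ≠ v → B u v ∨ B v u) (hne : K.Nonempty) :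
    ∃ a ∈ K, ∀ x ∈ K, Relation.ReflTransGen (kEdge B K) a x := by
  obtain ⟨a, haK, hamax⟩ := Set.exists_max_image K
    (fun a => {x | x ∈ K ∧ Relation.ReflTransGen (kEdge B K) a x}.ncard)
    (Set.toFinite K) hne
  refine ⟨a, haK, ?_⟩
  intro x hx
  by_contra hax
  have hsub : {y | y ∈ K ∧ Relation.ReflTransGen (kEdge B K) a y} ⊆
      {y | y ∈ K ∧ Relation.ReflTransGen (kEdge B K) x y} := by
    rintro y ⟨hyK, hay⟩
    refine ⟨hyK, ?_⟩
    have hxy : y ≠ x := by rintro rfl; exact hax hay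
    rcases hK y hyK x hx hxy with h | h
    · exact absurd (hay.tail ⟨hyK, hx, h⟩) hax
    · exact Relation.ReflTransGen.single ⟨hx, hyK, h⟩
  have hss : {y | y ∈ K ∧ Relation.ReflTransGen (kEdge B K) a y} ⊂
      {y | y ∈ K ∧ Relation.ReflTransGen (kEdge B K) x y} := by
    refine (Set.ssubset_iff_of_subset hsub).mpr ⟨x, ⟨hx, Relation.ReflTransGen.refl⟩, ?_⟩
    rintro ⟨_, h⟩; exact hax h
  have h1 := Set.ncard_lt_ncard hss (Set.toFinite _)
  have h2 := hamax x hx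
  omega



/-- For an oriented graph whose underlying graph is split with
clique side `K` (`|K| ≥ 2`) and independent side `S`, where `Ss` and `St` are
the sinks and sources lying in `S`: every P3 hull set contains `Ss ∪ St`, and
`|Ss ∪ St| ≤ hn_{P3}(D) ≤ |Ss ∪ St| + 2`. -/
theorem stmt_15 {V : Type*} [Finite V] (A : V → V → Prop) (hA : IsOriented A)
    (K S : Set V) (hcover : K ∪ S = Set.univ) (hdisj : Disjoint K S)
    (hK : ∀ u ∈ K, ∀ v ∈ K, u ≠ v → A u v ∨ A v u)
    (hS : ∀ u ∈ S, ∀ v ∈ S, ¬ A u v)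
    (hK2 : 2 ≤ K.ncard)
    (Ss St : Set V)
    (hSs : Ss = {v | v ∈ S ∧ ∀ u, ¬ A v u})
    (hSt : St = {v | v ∈ S ∧ ∀ u, ¬ A u v}) :
    (∀ H : Set V, IsHullSet (p3Interval A) H → Ss ∪ St ⊆ H) ∧
    hullNumber (p3Interval A) ≤ (Ss ∪ St).ncard + 2 ∧
    (Ss ∪ St).ncard ≤ hullNumber (p3Interval A) := by
  classical
  have hmidmem : ∀ x w y : V, A x w → A w y → w ∈ p3Interval A x y :=
    fun x w y h1 h2 => Set.mem_union_right _ (Or.inl ⟨h1, h2⟩)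
  -- Part 1 : every hull set contains Ss ∪ St
  have part1 : ∀ H : Set V, IsHullSet (p3Interval A) H → Ss ∪ St ⊆ H := by
    intro H hH v hv
    by_contra hvH
    have hconv : IsConvexSet (p3Interval A) ({v}ᶜ : Set V) := by
      intro u hu w hw x hx
      rcases hx with hx | hx
      · rcases hx with rfl | hx
        · exact hu
        · rw [Set.mem_singleton_iff] at hx; subst hx; exact hw
      · simp only [Set.mem_compl_iff, Set.mem_singleton_iff]
        rintro rfl
        rcases hx with ⟨h1, h2⟩ | ⟨h1, h2⟩ <;>
          rcases hv with hv | hv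
        · rw [hSs] at hv; exact hv.2 _ h2
        · rw [hSt] at hv; exact hv.2 _ h1
        · rw [hSs] at hv; exact hv.2 _ h2
        · rw [hSt] at hv; exact hv.2 _ h1
    have hsubC : H ⊆ ({v}ᶜ : Set V) := by
      intro x hx
      simp only [Set.mem_compl_iff, Set.mem_singleton_iff]
      rintro rfl; exact hvH hx
    have hsub2 := convexHullD_min' hconv hsubC
    rw [hH] at hsub2
    exact hsub2 (Set.mem_univ v) rfl
  -- Part 3 : lower bound
  have hne_k : (Set.univ : Set V).ncard ∈
      {k | ∃ S' : Set V, IsHullSet (p3Interval A) S' ∧ S'.ncard = k} :=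
    ⟨Set.univ, isHullSet_univ' _, rfl⟩
  obtain ⟨H0, hH0hull, hH0card⟩ := Nat.sInf_mem (⟨_, hne_k⟩ :
      {k | ∃ S' : Set V, IsHullSet (p3Interval A) S' ∧ S'.ncard = k}.Nonempty)
  have part3 : (Ss ∪ St).ncard ≤ hullNumber (p3Interval A) := by
    have h1 : (Ss ∪ St).ncard ≤ H0.ncard :=
      Set.ncard_le_ncard (part1 H0 hH0hull) (Set.toFinite H0)
    have h2 : hullNumber (p3Interval A) = H0.ncard := hH0card.symm
    omega
  -- Part 2 : construction of a small hull set
  have hKne : K.Nonempty := Set.nonempty_of_ncard_ne_zero (by omega)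
  obtain ⟨a0, ha0K, ha0⟩ := tournament_reach' A K hK hKne
  obtain ⟨b0, hb0K, hb0⟩ := tournament_reach' (fun u v => A v u) K
    (fun u hu v hv huv => (hK u hu v hv huv).symm) hKne
  obtain ⟨⟨a, b⟩, hab, hmax⟩ := Set.exists_max_image
    {p : V × V | p.1 ∈ K ∧ p.2 ∈ K ∧ (∀ x ∈ K, Relation.ReflTransGen (kEdge A K) p.1 x) ∧
      (∀ x ∈ K, Relation.ReflTransGen (kEdge (fun u v => A v u) K) p.2 x)}
    (fun p => ((convexHullD (p3Interval A) (Ss ∪ St ∪ {p.1, p.2})) ∩ K).ncard)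
    (Set.toFinite _) ⟨(a0, b0), ha0K, hb0K, ha0, hb0⟩
  obtain ⟨haK, hbK, haR, hbR⟩ := hab
  have haG : a ∈ Ss ∪ St ∪ {a, b} := Set.mem_union_right _ (Set.mem_insert _ _)
  have hbG : b ∈ Ss ∪ St ∪ {a, b} := Set.mem_union_right _ (Set.mem_insert_of_mem _ rfl)
  have key : ∀ C : Set V, IsConvexSet (p3Interval A) C → Ss ∪ St ∪ {a, b} ⊆ C →
      Set.univ ⊆ C := by
    intro C hC hGC
    have haC : a ∈ C := hGC haG
    have hbC : b ∈ C := hGC hbG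
    have notboth : ∀ w, w ∉ C → (∃ x ∈ C, A x w) → (∃ y ∈ C, A w y) → False := by
      rintro w hw ⟨x, hx, hxw⟩ ⟨y, hy, hwy⟩
      exact hw (hC x hx y hy (hmidmem x w y hxw hwy))
    have hKC : K ⊆ C := by
      by_contra hnot
      rw [Set.not_subset] at hnot
      obtain ⟨w0, hw0K, hw0C⟩ := hnot
      by_cases hminus : ∃ w ∈ K, w ∉ C ∧ ∀ x ∈ C, ¬ A w x
      · by_cases hplus : ∃ w ∈ K, w ∉ C ∧ ∀ x ∈ C, ¬ A x w
        · -- swap argument: a strictly better pair exists, contradiction with maximality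
          obtain ⟨wm, hwmK, hwmC, hwm⟩ := hminus
          obtain ⟨wp, hwpK, hwpC, hwp⟩ := hplus
          have hwpa : A wp a := by
            rcases hK wp hwpK a haK (by rintro rfl; exact hwpC haC) with h | h
            · exact h
            · exact absurd h (hwp a haC)
          have hbwm : A b wm := by
            rcases hK b hbK wm hwmK (by rintro rfl; exact hwmC hbC) with h | h
            · exact h
            · exact absurd h (hwm b hbC)
          have hne : wp ≠ wm := by
            rintro rfl; exact hwm a haC hwpa
          have hwpH' : wp ∈ convexHullD (p3Interval A) (Ss ∪ St ∪ {wp, wm}) :=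
            subset_convexHullD' _ _ (Set.mem_union_right _ (Set.mem_insert _ _))
          have hwmH' : wm ∈ convexHullD (p3Interval A) (Ss ∪ St ∪ {wp, wm}) :=
            subset_convexHullD' _ _ (Set.mem_union_right _ (Set.mem_insert_of_mem _ rfl))
          have hmidH' : C ∩ K ⊆ convexHullD (p3Interval A) (Ss ∪ St ∪ {wp, wm}) := by
            rintro h ⟨hhC, hhK⟩
            have h1 : A wp h := by
              rcases hK wp hwpK h hhK (by rintro rfl; exact hwpC hhC) with h' | h'
              · exact h'
              · exact absurd h' (hwp h hhC)
            have h2 : A h wm := by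
              rcases hK h hhK wm hwmK (by rintro rfl; exact hwmC hhC) with h' | h'
              · exact h'
              · exact absurd h' (hwm h hhC)
            exact convexHullD_isConvex' _ _ wp hwpH' wm hwmH' (hmidmem wp h wm h1 h2)
          have hins : insert wp (insert wm (C ∩ K)) ⊆
              convexHullD (p3Interval A) (Ss ∪ St ∪ {wp, wm}) ∩ K := by
            rintro x (rfl | rfl | hx)
            · exact ⟨hwpH', hwpK⟩
            · exact ⟨hwmH', hwmK⟩
            · exact ⟨hmidH' hx, hx.2⟩
          have hcard : (C ∩ K).ncard + 2 ≤
              (convexHullD (p3Interval A) (Ss ∪ St ∪ {wp, wm}) ∩ K).ncard := by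
            have e1 : (insert wm (C ∩ K)).ncard = (C ∩ K).ncard + 1 :=
              Set.ncard_insert_of_notMem (fun h => hwmC h.1) (Set.toFinite _)
            have e2 : (insert wp (insert wm (C ∩ K))).ncard
                = (insert wm (C ∩ K)).ncard + 1 := by
              refine Set.ncard_insert_of_notMem ?_ (Set.toFinite _)
              rintro (rfl | h)
              · exact hne rfl
              · exact hwpC h.1
            have e3 := Set.ncard_le_ncard hins (Set.toFinite _)
            omega
          have hPmem : ((wp, wm) : V × V) ∈
              {p : V × V | p.1 ∈ K ∧ p.2 ∈ K ∧
                (∀ x ∈ K, Relation.ReflTransGen (kEdge A K) p.1 x) ∧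
                (∀ x ∈ K, Relation.ReflTransGen (kEdge (fun u v => A v u) K) p.2 x)} := by
            refine ⟨hwpK, hwmK, ?_, ?_⟩
            · intro x hx
              exact Relation.ReflTransGen.head ⟨hwpK, haK, hwpa⟩ (haR x hx)
            · intro x hx
              exact Relation.ReflTransGen.head ⟨hwmK, hbK, hbwm⟩ (hbR x hx)
          have hle : (convexHullD (p3Interval A) (Ss ∪ St ∪ {wp, wm}) ∩ K).ncard ≤
              (convexHullD (p3Interval A) (Ss ∪ St ∪ {a, b}) ∩ K).ncard :=
            hmax (wp, wm) hPmem
          have hhullC : convexHullD (p3Interval A) (Ss ∪ St ∪ {a, b}) ⊆ C :=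
            convexHullD_min' hC hGC
          have hfab : (convexHullD (p3Interval A) (Ss ∪ St ∪ {a, b}) ∩ K).ncard ≤
              (C ∩ K).ncard :=
            Set.ncard_le_ncard (fun x hx => ⟨hhullC hx.1, hx.2⟩) (Set.toFinite _)
          omega
        · -- every vertex outside C (in K) has an in-arc from C, hence no out-arc; use b
          push_neg at hplus
          have hnoout : ∀ w ∈ K, w ∉ C → ∀ y ∈ C, ¬ A w y := by
            intro w hwK hwC y hy hwy
            obtain ⟨x, hx, hxw⟩ := hplus w hwK hwC
            exact notboth w hwC ⟨x, hx, hxw⟩ ⟨y, hy, hwy⟩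
          have hreach : ∀ x, Relation.ReflTransGen (kEdge (fun u v => A v u) K) b x →
              x ∈ C := by
            intro x hx
            induction hx with
            | refl => exact hbC
            | tail _hab hbc ih =>
              by_contra hcC
              exact hnoout _ hbc.2.1 hcC _ ih hbc.2.2
          exact hw0C (hreach w0 (hbR w0 hw0K))
      · -- every vertex outside C (in K) has an out-arc to C, hence no in-arc; use a
        push_neg at hminus
        have hnoin : ∀ w ∈ K, w ∉ C → ∀ y ∈ C, ¬ A y w := by
          intro w hwK hwC y hy hyw
          obtain ⟨x, hx, hwx⟩ := hminus w hwK hwC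
          exact notboth w hwC ⟨y, hy, hyw⟩ ⟨x, hx, hwx⟩
        have hreach : ∀ x, Relation.ReflTransGen (kEdge A K) a x → x ∈ C := by
          intro x hx
          induction hx with
          | refl => exact haC
          | tail _hab hbc ih =>
            by_contra hcC
            exact hnoin _ hbc.2.1 hcC _ ih hbc.2.2
        exact hw0C (hreach w0 (haR w0 hw0K))
    -- now all of S
    intro v _
    have hv : v ∈ K ∪ S := by rw [hcover]; trivial
    rcases hv with hv | hv
    · exact hKC hv
    · by_cases hvss : v ∈ Ss ∪ St
      · exact hGC (Set.mem_union_left _ hvss)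
      · have h1 : ∃ u, A v u := by
          by_contra h; push_neg at h
          exact hvss (Or.inl (by rw [hSs]; exact ⟨hv, h⟩))
        have h2 : ∃ u, A u v := by
          by_contra h; push_neg at h
          exact hvss (Or.inr (by rw [hSt]; exact ⟨hv, h⟩))
        obtain ⟨u, hu⟩ := h1
        obtain ⟨u', hu'⟩ := h2
        have huK : u ∈ K := by
          have hu2 : u ∈ K ∪ S := by rw [hcover]; trivial
          rcases hu2 with h | h
          · exact h
          · exact absurd hu (hS v hv u h)
        have hu'K : u' ∈ K := by
          have hu2 : u' ∈ K ∪ S := by rw [hcover]; trivial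
          rcases hu2 with h | h
          · exact h
          · exact absurd hu' (hS u' h v hv)
        exact hC u' (hKC hu'K) u (hKC huK) (hmidmem u' v u hu' hu)
  have hhullG : IsHullSet (p3Interval A) (Ss ∪ St ∪ {a, b}) :=
    Set.eq_univ_of_univ_subset (Set.subset_sInter fun C hC => key C hC.1 hC.2)
  have part2 : hullNumber (p3Interval A) ≤ (Ss ∪ St).ncard + 2 := by
    have hmem : (Ss ∪ St ∪ {a, b}).ncard ∈
        {k | ∃ S' : Set V, IsHullSet (p3Interval A) S' ∧ S'.ncard = k} :=
      ⟨_, hhullG, rfl⟩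
    have h1 : hullNumber (p3Interval A) ≤ (Ss ∪ St ∪ {a, b}).ncard := Nat.sInf_le hmem
    have h2 := Set.ncard_union_le (Ss ∪ St) ({a, b} : Set V)
    have h3 : ({a, b} : Set V).ncard ≤ 2 := by
      have h4 := Set.ncard_insert_le a ({b} : Set V)
      have h5 : ({b} : Set V).ncard = 1 := Set.ncard_singleton b
      omega
    omega
  exact ⟨part1, part2, part3⟩
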